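/- Let 0 < p < ∞ and 0 < η < p/2. There is a constant c = c(p, η) > 0, depending only on p and η, such that for all z, w ∈ D, ∫_D (1 − |u|²)^{p−η} |1 − conj(z)u|^{−(2+p)} |1 − conj(w)u|^{−2} dm(u) ≤ c (1 − |z|²)^{−η} |1 − conj(w)z|^{−2}. -/

import Mathlib

open MeasureTheory Filter Topology Set
open scoped ENNReal

noncomputable section

/-- The open unit disk in `ℂ`. -/
def unitDisk : Set ℂ := Metric.ball 0 1

/-- The Möbius map `σ_w(z) = (w - z)/(1 - conj(w) z)`. -/
def mobiusMap (w z : ℂ) : ℂ := (w - z) / (1 - (starRingEnd ℂ) w * z)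

/-- The `Q_p` norm (extended-real valued):
`‖f‖_{Q_p} = |f(0)| + sup_{w ∈ D} (∫_D |f'(z)|² (1-|σ_w(z)|²)^p dm(z))^{1/2}`. -/
def qpNorm (p : ℝ) (f : ℂ → ℂ) : ℝ≥0∞ :=
  ENNReal.ofReal (‖f 0‖) +
    ⨆ w ∈ unitDisk,
      (∫⁻ z in unitDisk,
        ENNReal.ofReal (‖deriv f z‖ ^ 2 *
          (1 - ‖mobiusMap w z‖ ^ 2) ^ p)) ^ (1/2 : ℝ)

/-- The Carleson square `S(I)` over the subarc `I = {e^{it} : |t - θ| ≤ π h}` of the unit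
circle, of normalized arclength `h`: `S(I) = {r ξ : 1 - h ≤ r < 1, ξ ∈ I}`. -/
def carlesonSquare (θ h : ℝ) : Set ℂ :=
  {z : ℂ | ∃ r t : ℝ, 1 - h ≤ r ∧ r < 1 ∧ |t - θ| ≤ Real.pi * h ∧
    z = (r : ℂ) * Complex.exp (t * Complex.I)}

/-- The logarithmic Carleson quantity
`‖μ‖²_{LCM_p} = sup_{S(I) ⊆ D} μ(S(I)) |I|^{-p} (log(2/|I|))²`, defined for an arbitrary
set function `μ` (applied below to measures and to `μ_{p,g}`). -/
def lcmSup (p : ℝ) (μ : Set ℂ → ℝ≥0∞) : ℝ≥0∞ :=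
  ⨆ (θ : ℝ) (h : ℝ) (_ : h ∈ Set.Ioc (0:ℝ) 1),
    (μ (carlesonSquare θ h) *
      ENNReal.ofReal (h ^ (-p) * (Real.log (2 / h)) ^ 2)) ^ (1/2 : ℝ)

/-- The tent-space norm `‖f‖_{T^∞_p(μ)} = sup_{S(I) ⊆ D} (|I|^{-p} ∫_{S(I)} |f|² dμ)^{1/2}`. -/
def tentNorm (p : ℝ) (μ : Measure ℂ) (f : ℂ → ℂ) : ℝ≥0∞ :=
  ⨆ (θ : ℝ) (h : ℝ) (_ : h ∈ Set.Ioc (0:ℝ) 1),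
    (ENNReal.ofReal (h ^ (-p)) *
      ∫⁻ z in carlesonSquare θ h, ENNReal.ofReal (‖f z‖ ^ 2) ∂μ) ^ (1/2 : ℝ)

/-- The measure `dμ_{p,g}(z) = (1-|z|²)^p |g'(z)|² dm(z)`, as a set function. -/
def mupg (p : ℝ) (g : ℂ → ℂ) (E : Set ℂ) : ℝ≥0∞ :=
  ∫⁻ z in E, ENNReal.ofReal ((1 - ‖z‖ ^ 2) ^ p * ‖deriv g z‖ ^ 2)

/-- The Volterra operator `V_g f(z) = ∫₀^z g'(w) f(w) dw` (along the segment from `0` to `z`). -/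
def Vop (g f : ℂ → ℂ) : ℂ → ℂ :=
  fun z => z * ∫ t in (0:ℝ)..1, deriv g ((t : ℂ) * z) * f ((t : ℂ) * z)

/-- The operator `U_g f(z) = ∫₀^z g(w) f'(w) dw` (along the segment from `0` to `z`). -/
def Uop (g f : ℂ → ℂ) : ℂ → ℂ :=
  fun z => z * ∫ t in (0:ℝ)..1, g ((t : ℂ) * z) * deriv f ((t : ℂ) * z)

/-- The `D_p` (weighted Dirichlet) norm
`‖f‖_{D_p} = |f(0)| + (∫_D |f'(z)|² (1-|z|²)^p dm(z))^{1/2}`. -/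
def dpNorm (p : ℝ) (f : ℂ → ℂ) : ℝ≥0∞ :=
  ENNReal.ofReal (‖f 0‖) +
    (∫⁻ z in unitDisk,
      ENNReal.ofReal (‖deriv f z‖ ^ 2 * (1 - ‖z‖ ^ 2) ^ p)) ^ (1/2 : ℝ)

/-- The Carleson box with vertex `w`:
`S(w) = {z ∈ D : 1-|z| ≤ 1-|w|, |arg(w conj z)| ≤ π(1-|w|)}`. -/
def carlesonBox (w : ℂ) : Set ℂ :=
  {z : ℂ | ‖z‖ < 1 ∧ 1 - ‖z‖ ≤ 1 - ‖w‖ ∧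
    |Complex.arg (w * (starRingEnd ℂ) z)| ≤ Real.pi * (1 - ‖w‖)}

/-- The heightened Carleson box with vertex `w`:
`S̃(w) = {z ∈ D : 1-|z| ≤ 2(1-|w|), |arg(w conj z)| ≤ π(1-|w|)}`. -/
def carlesonBoxT (w : ℂ) : Set ℂ :=
  {z : ℂ | ‖z‖ < 1 ∧ 1 - ‖z‖ ≤ 2 * (1 - ‖w‖) ∧
    |Complex.arg (w * (starRingEnd ℂ) z)| ≤ Real.pi * (1 - ‖w‖)}

-- basic facts
lemma aux_one_sub_le_left {z u : ℂ} (hz : ‖z‖ ≤ 1) (hu : ‖u‖ ≤ 1) :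
    1 - ‖u‖ ≤ ‖1 - (starRingEnd ℂ) z * u‖ := by
  have h1 : ‖(starRingEnd ℂ) z * u‖ ≤ ‖u‖ := by
    rw [norm_mul, Complex.norm_conj]
    calc ‖z‖ * ‖u‖ ≤ 1 * ‖u‖ := by
          exact mul_le_mul_of_nonneg_right hz (norm_nonneg u)
      _ = ‖u‖ := one_mul _
  calc 1 - ‖u‖ ≤ 1 - ‖(starRingEnd ℂ) z * u‖ := by linarith
    _ ≤ ‖1 - (starRingEnd ℂ) z * u‖ := by
        have := norm_sub_norm_le (1 : ℂ) ((starRingEnd ℂ) z * u)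
        simpa using this

lemma aux_one_sub_le_right {z u : ℂ} (hz : ‖z‖ ≤ 1) (hu : ‖u‖ ≤ 1) :
    1 - ‖z‖ ≤ ‖1 - (starRingEnd ℂ) z * u‖ := by
  have h1 : ‖(starRingEnd ℂ) z * u‖ ≤ ‖z‖ := by
    rw [norm_mul, Complex.norm_conj]
    exact mul_le_of_le_one_right (norm_nonneg z) hu
  calc 1 - ‖z‖ ≤ 1 - ‖(starRingEnd ℂ) z * u‖ := by linarith
    _ ≤ ‖1 - (starRingEnd ℂ) z * u‖ := by
        have := norm_sub_norm_le (1 : ℂ) ((starRingEnd ℂ) z * u)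
        simpa using this

lemma aux_dist_le {z u : ℂ} (hz : ‖z‖ ≤ 1) (hu : ‖u‖ ≤ 1) :
    ‖u - z‖ ≤ ‖1 - (starRingEnd ℂ) z * u‖ := by
  have hsq : ‖u - z‖ ^ 2 ≤ ‖1 - (starRingEnd ℂ) z * u‖ ^ 2 := by
    rw [Complex.sq_norm, Complex.sq_norm]
    have key : Complex.normSq (1 - (starRingEnd ℂ) z * u) - Complex.normSq (u - z)
        = (1 - Complex.normSq z) * (1 - Complex.normSq u) := by
      simp only [Complex.normSq_apply, Complex.sub_re, Complex.sub_im, Complex.one_re,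
        Complex.one_im, Complex.mul_re, Complex.mul_im, Complex.conj_re, Complex.conj_im]
      ring
    have hz' : Complex.normSq z ≤ 1 := by
      have := Complex.sq_norm z; nlinarith [norm_nonneg z]
    have hu' : Complex.normSq u ≤ 1 := by
      have := Complex.sq_norm u; nlinarith [norm_nonneg u]
    nlinarith
  nlinarith [norm_nonneg (u - z), norm_nonneg (1 - (starRingEnd ℂ) z * u)]

lemma aux_triangle {z w u : ℂ} (hz : ‖z‖ ≤ 1) (hw : ‖w‖ ≤ 1)
    (hu : ‖u‖ ≤ 1) :
    ‖1 - (starRingEnd ℂ) w * z‖ ≤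
      ‖1 - (starRingEnd ℂ) w * u‖ + ‖1 - (starRingEnd ℂ) z * u‖ := by
  have hid : (1 - (starRingEnd ℂ) w * z) = (1 - (starRingEnd ℂ) w * u) + (starRingEnd ℂ) w * (u - z) := by ring
  calc ‖1 - (starRingEnd ℂ) w * z‖
      ≤ ‖1 - (starRingEnd ℂ) w * u‖ + ‖(starRingEnd ℂ) w * (u - z)‖ := by
        rw [hid]; exact norm_add_le _ _
    _ ≤ ‖1 - (starRingEnd ℂ) w * u‖ + ‖1 - (starRingEnd ℂ) z * u‖ := by
        have h1 : ‖(starRingEnd ℂ) w * (u - z)‖ ≤ ‖u - z‖ := by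
          rw [norm_mul, Complex.norm_conj]
          exact mul_le_of_le_one_left (norm_nonneg _) hw
        have h2 := aux_dist_le hz hu
        linarith

lemma aux_sublevel (z : ℂ) (hz : ‖z‖ ≤ 1) {R : ℝ} (hR : 0 < R) :
    volume {u : ℂ | ‖u‖ < 1 ∧ ‖1 - (starRingEnd ℂ) z * u‖ < R}
      ≤ ENNReal.ofReal (16 * Real.pi * R ^ 2) := by
  by_cases hbig : 1/2 < ‖z‖
  · have hzne : (starRingEnd ℂ) z ≠ 0 := by
      simp only [ne_eq, map_eq_zero]
      intro h; rw [h] at hbig; simp at hbig; linarith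
    have hzpos : 0 < ‖(starRingEnd ℂ) z‖ := by
      rw [Complex.norm_conj]; linarith
    have hsub : {u : ℂ | ‖u‖ < 1 ∧ ‖1 - (starRingEnd ℂ) z * u‖ < R}
        ⊆ Metric.ball (((starRingEnd ℂ) z)⁻¹) (2*R) := by
      intro u hu
      obtain ⟨hu1, hu2⟩ := hu
      rw [Metric.mem_ball, Complex.dist_eq]
      have key : ‖(starRingEnd ℂ) z‖ * ‖u - ((starRingEnd ℂ) z)⁻¹‖
          = ‖1 - (starRingEnd ℂ) z * u‖ := by
        rw [← norm_mul]
        have : (starRingEnd ℂ) z * (u - ((starRingEnd ℂ) z)⁻¹) = (starRingEnd ℂ) z * u - 1 := by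
          field_simp
        rw [this, norm_sub_rev]
      have h2R : R ≤ ‖(starRingEnd ℂ) z‖ * (2*R) := by
        rw [Complex.norm_conj]; nlinarith
      have := hu2.trans_le h2R
      rw [← key] at this
      exact lt_of_mul_lt_mul_left this (le_of_lt hzpos)
    refine le_trans (measure_mono hsub) ?_
    rw [Complex.volume_ball]
    rw [← ENNReal.ofReal_pow (by positivity), ← ENNReal.ofReal_coe_nnreal,
      ← ENNReal.ofReal_mul (by positivity)]
    apply ENNReal.ofReal_le_ofReal
    rw [NNReal.coe_real_pi]
    nlinarith [Real.pi_pos]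
  · push_neg at hbig
    rcases Set.eq_empty_or_nonempty
        {u : ℂ | ‖u‖ < 1 ∧ ‖1 - (starRingEnd ℂ) z * u‖ < R} with he | hne
    · rw [he]; simp
    · obtain ⟨u, hu1, hu2⟩ := hne
      have hRhalf : 1/2 < R := by
        have h1 : ‖(starRingEnd ℂ) z * u‖ ≤ 1/2 := by
          rw [norm_mul, Complex.norm_conj]
          nlinarith [norm_nonneg z, norm_nonneg u]
        have h2 : (1:ℝ) - 1/2 ≤ ‖1 - (starRingEnd ℂ) z * u‖ := by
          have := norm_sub_norm_le (1 : ℂ) ((starRingEnd ℂ) z * u)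
          simp only [norm_one] at this
          linarith
        linarith
      have hsub2 : {u : ℂ | ‖u‖ < 1 ∧ ‖1 - (starRingEnd ℂ) z * u‖ < R}
          ⊆ Metric.ball (0:ℂ) 1 := by
        intro v hv
        rw [Metric.mem_ball, Complex.dist_eq, sub_zero]
        exact hv.1
      refine le_trans (measure_mono hsub2) ?_
      rw [Complex.volume_ball]
      rw [← ENNReal.ofReal_pow (by norm_num), ← ENNReal.ofReal_coe_nnreal,
        ← ENNReal.ofReal_mul (by norm_num)]
      apply ENNReal.ofReal_le_ofReal
      rw [NNReal.coe_real_pi]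
      have h4 : 1/4 < R^2 := by nlinarith
      nlinarith [Real.pi_pos]

lemma aux_master (z : ℂ) (hz : ‖z‖ ≤ 1) (S : Set ℂ) (f : ℂ → ℝ)
    (c R : ℕ → ℝ) (hc : ∀ k, 0 ≤ c k) (hR : ∀ k, 0 < R k)
    (hcover : ∀ u ∈ S, ∃ k, f u ≤ c k ∧ ‖u‖ < 1 ∧
      ‖1 - (starRingEnd ℂ) z * u‖ < R k) :
    ∫⁻ u in S, ENNReal.ofReal (f u) ≤
      ∑' k, ENNReal.ofReal (c k * (16 * Real.pi * (R k) ^ 2)) := by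
  set U : ℕ → Set ℂ := fun k =>
    {u : ℂ | ‖u‖ < 1 ∧ ‖1 - (starRingEnd ℂ) z * u‖ < R k} with hU
  have hUopen : ∀ k, IsOpen (U k) := by
    intro k
    apply IsOpen.inter
    · exact isOpen_lt (continuous_norm) continuous_const
    · exact isOpen_lt (continuous_norm.comp
        (continuous_const.sub (continuous_const.mul continuous_id))) continuous_const
  have hUmeas : ∀ k, MeasurableSet (U k) := fun k => (hUopen k).measurableSet
  set g : ℂ → ℝ≥0∞ := fun u => ∑' k, (U k).indicator (fun _ => ENNReal.ofReal (c k)) u with hg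
  have hgmeas : ∀ k, Measurable ((U k).indicator (fun _ : ℂ => ENNReal.ofReal (c k))) :=
    fun k => measurable_const.indicator (hUmeas k)
  have hpt : ∀ u ∈ S, ENNReal.ofReal (f u) ≤ g u := by
    intro u hu
    obtain ⟨k, hk1, hk2, hk3⟩ := hcover u hu
    calc ENNReal.ofReal (f u) ≤ (U k).indicator (fun _ => ENNReal.ofReal (c k)) u := by
          rw [Set.indicator_of_mem (show u ∈ U k from ⟨hk2, hk3⟩)]
          exact ENNReal.ofReal_le_ofReal hk1
      _ ≤ g u := ENNReal.le_tsum k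
  calc ∫⁻ u in S, ENNReal.ofReal (f u)
      ≤ ∫⁻ u in S, g u := by
        apply setLIntegral_mono (Measurable.ennreal_tsum hgmeas) hpt
    _ = ∑' k, ∫⁻ u in S, (U k).indicator (fun _ => ENNReal.ofReal (c k)) u :=
        lintegral_tsum (fun k => (hgmeas k).aemeasurable)
    _ ≤ ∑' k, ENNReal.ofReal (c k * (16 * Real.pi * (R k) ^ 2)) := by
        apply ENNReal.tsum_le_tsum
        intro k
        calc ∫⁻ u in S, (U k).indicator (fun _ => ENNReal.ofReal (c k)) u
            ≤ ∫⁻ u, (U k).indicator (fun _ => ENNReal.ofReal (c k)) u :=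
              setLIntegral_le_lintegral _ _
          _ = ENNReal.ofReal (c k) * volume (U k) := by
              rw [lintegral_indicator (hUmeas k), setLIntegral_const]
          _ ≤ ENNReal.ofReal (c k) * ENNReal.ofReal (16 * Real.pi * (R k) ^ 2) := by
              apply mul_le_mul_right (aux_sublevel z hz (hR k))
          _ = ENNReal.ofReal (c k * (16 * Real.pi * (R k) ^ 2)) := by
              rw [← ENNReal.ofReal_mul (hc k)]

lemma aux_geom (A r : ℝ) (hA : 0 ≤ A) (hr0 : 0 ≤ r) (hr1 : r < 1) :
    ∑' k : ℕ, ENNReal.ofReal (A * r ^ k) ≤ ENNReal.ofReal (A / (1 - r)) := by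
  have h1 : ∀ k : ℕ, ENNReal.ofReal (A * r ^ k) = ENNReal.ofReal A * ENNReal.ofReal r ^ k := by
    intro k
    rw [ENNReal.ofReal_mul hA, ENNReal.ofReal_pow hr0]
  calc ∑' k : ℕ, ENNReal.ofReal (A * r ^ k)
      = ENNReal.ofReal A * ∑' k : ℕ, ENNReal.ofReal r ^ k := by
        simp_rw [h1]; exact ENNReal.tsum_mul_left
    _ = ENNReal.ofReal A * (1 - ENNReal.ofReal r)⁻¹ := by rw [ENNReal.tsum_geometric]
    _ = ENNReal.ofReal (A / (1 - r)) := by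
        have h2 : (1 : ℝ≥0∞) - ENNReal.ofReal r = ENNReal.ofReal (1 - r) := by
          rw [ENNReal.ofReal_sub 1 hr0, ENNReal.ofReal_one]
        rw [h2, ← ENNReal.ofReal_inv_of_pos (by linarith), ← ENNReal.ofReal_mul hA,
          div_eq_mul_inv]
    _ ≤ ENNReal.ofReal (A / (1 - r)) := le_rfl
-- fix: nothing

lemma aux_dyadic_up {d v : ℝ} (hd : 0 < d) (hv : d ≤ v) :
    ∃ k : ℕ, 2 ^ k * d ≤ v ∧ v < 2 ^ (k + 1) * d := by
  have hex : ∃ n : ℕ, v < 2 ^ (n + 1) * d := by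
    obtain ⟨n, hn⟩ := pow_unbounded_of_one_lt (v / d) (by norm_num : (1:ℝ) < 2)
    refine ⟨n, ?_⟩
    rw [div_lt_iff₀ hd] at hn
    have : (2:ℝ)^n ≤ 2^(n+1) := by
      apply pow_le_pow_right₀ (by norm_num)
      omega
    nlinarith
  classical
  set k := Nat.find hex with hk
  refine ⟨k, ?_, Nat.find_spec hex⟩
  rcases Nat.eq_zero_or_pos k with h0 | hpos
  · rw [h0]; simpa using hv
  · have hmin := Nat.find_min hex (show k - 1 < k by omega)
    push_neg at hmin
    have : k - 1 + 1 = k := by omega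
    rw [this] at hmin
    exact hmin

lemma aux_dyadic_down {δ v : ℝ} (hv : 0 < v) (hvδ : v < δ) :
    ∃ k : ℕ, δ / 2 ^ (k + 1) ≤ v ∧ v < δ / 2 ^ k := by
  have hδ : 0 < δ := hv.trans hvδ
  have hex : ∃ n : ℕ, δ / 2 ^ (n + 1) ≤ v := by
    obtain ⟨n, hn⟩ := pow_unbounded_of_one_lt (δ / v) (by norm_num : (1:ℝ) < 2)
    refine ⟨n, ?_⟩
    rw [div_lt_iff₀ hv] at hn
    rw [div_le_iff₀ (by positivity)]
    have : (2:ℝ)^n ≤ 2^(n+1) := by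
      apply pow_le_pow_right₀ (by norm_num)
      omega
    nlinarith
  classical
  set k := Nat.find hex with hk
  refine ⟨k, Nat.find_spec hex, ?_⟩
  rcases Nat.eq_zero_or_pos k with h0 | hpos
  · rw [h0]; simpa using hvδ
  · have hmin := Nat.find_min hex (show k - 1 < k by omega)
    push_neg at hmin
    have : k - 1 + 1 = k := by omega
    rw [this] at hmin
    exact hmin

lemma aux_pow_rpow (k : ℕ) (t : ℝ) : ((2:ℝ) ^ k) ^ t = ((2:ℝ) ^ t) ^ k := by
  rw [← Real.rpow_natCast (2:ℝ) k, ← Real.rpow_mul (by norm_num), mul_comm,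
    Real.rpow_mul (by norm_num : (0:ℝ) ≤ 2), Real.rpow_natCast]

lemma aux_lemA {s : ℝ} (hs : 0 < s) (z : ℂ) (hz : ‖z‖ < 1) :
    ∫⁻ u in Metric.ball (0:ℂ) 1,
      ENNReal.ofReal ((‖1 - (starRingEnd ℂ) z * u‖) ^ (-(2 + s))) ≤
      ENNReal.ofReal (64 * Real.pi / (1 - 2 ^ (-s)) * (1 - ‖z‖) ^ (-s)) := by
  set d : ℝ := 1 - ‖z‖ with hdd
  have hd : 0 < d := by simp only [hdd]; linarith
  have hmaster := aux_master z hz.le (Metric.ball (0:ℂ) 1)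
    (fun u => (‖1 - (starRingEnd ℂ) z * u‖) ^ (-(2 + s)))
    (fun k => (2 ^ k * d) ^ (-(2 + s))) (fun k => 2 ^ (k + 1) * d)
    (fun k => Real.rpow_nonneg (by positivity) _) (fun k => by positivity) ?_
  · refine hmaster.trans ?_
    have hterm : ∀ k : ℕ, ((2:ℝ) ^ k * d) ^ (-(2 + s)) * (16 * Real.pi * (2 ^ (k + 1) * d) ^ 2)
        = (64 * Real.pi * d ^ (-s)) * ((2:ℝ) ^ (-s)) ^ k := by
      intro k
      have hx : (0:ℝ) < 2 ^ k * d := by positivity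
      have h1 : ((2:ℝ) ^ (k+1) * d) ^ 2 = 4 * (2 ^ k * d) ^ 2 := by
        rw [pow_succ]; ring
      have h2 : ((2:ℝ) ^ k * d) ^ (-(2 + s)) * ((2:ℝ) ^ k * d) ^ (2:ℕ)
          = ((2:ℝ) ^ k * d) ^ (-s) := by
        rw [← Real.rpow_natCast ((2:ℝ) ^ k * d) 2, ← Real.rpow_add hx]
        norm_num
      have h3 : ((2:ℝ) ^ k * d) ^ (-s) = ((2:ℝ) ^ (-s)) ^ k * d ^ (-s) := by
        rw [Real.mul_rpow (by positivity) hd.le, aux_pow_rpow]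
      calc ((2:ℝ) ^ k * d) ^ (-(2 + s)) * (16 * Real.pi * (2 ^ (k + 1) * d) ^ 2)
          = (((2:ℝ) ^ k * d) ^ (-(2 + s)) * ((2:ℝ) ^ k * d) ^ (2:ℕ)) * (64 * Real.pi) := by
            rw [h1]; push_cast; ring
        _ = ((2:ℝ) ^ (-s)) ^ k * d ^ (-s) * (64 * Real.pi) := by rw [h2, h3]
        _ = (64 * Real.pi * d ^ (-s)) * ((2:ℝ) ^ (-s)) ^ k := by ring
    calc ∑' k, ENNReal.ofReal (((2:ℝ) ^ k * d) ^ (-(2 + s)) * (16 * Real.pi * (2 ^ (k + 1) * d) ^ 2))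
        = ∑' k, ENNReal.ofReal ((64 * Real.pi * d ^ (-s)) * ((2:ℝ) ^ (-s)) ^ k) := by
          apply tsum_congr; intro k; rw [hterm k]
      _ ≤ ENNReal.ofReal ((64 * Real.pi * d ^ (-s)) / (1 - 2 ^ (-s))) := by
          apply aux_geom _ _ (by positivity) (Real.rpow_nonneg (by norm_num) _)
          apply Real.rpow_lt_one_of_one_lt_of_neg (by norm_num) (by linarith)
      _ = ENNReal.ofReal (64 * Real.pi / (1 - 2 ^ (-s)) * (1 - ‖z‖) ^ (-s)) := by
          rw [← hdd]; congr 1; ring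
  · -- cover
    intro u hu
    have hu1 : ‖u‖ < 1 := by
      rwa [Metric.mem_ball, Complex.dist_eq, sub_zero] at hu
    set v : ℝ := ‖1 - (starRingEnd ℂ) z * u‖ with hvv
    have hv : d ≤ v := aux_one_sub_le_right hz.le hu1.le
    obtain ⟨k, hk1, hk2⟩ := aux_dyadic_up hd hv
    refine ⟨k, ?_, hu1, hk2⟩
    exact Real.rpow_le_rpow_of_nonpos (by positivity) hk1 (by linarith)

lemma aux_lemB {t : ℝ} (ht : 0 < t) (w : ℂ) (hw : ‖w‖ < 1) {δ : ℝ} (hδ : 0 < δ) :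
    ∫⁻ u in {u : ℂ | ‖u‖ < 1 ∧ ‖1 - (starRingEnd ℂ) w * u‖ < δ},
      ENNReal.ofReal ((‖1 - (starRingEnd ℂ) w * u‖) ^ (t - 2)) ≤
      ENNReal.ofReal (64 * Real.pi / (1 - 2 ^ (-t)) * δ ^ t) := by
  have hmaster := aux_master w hw.le
    {u : ℂ | ‖u‖ < 1 ∧ ‖1 - (starRingEnd ℂ) w * u‖ < δ}
    (fun u => (‖1 - (starRingEnd ℂ) w * u‖) ^ (t - 2))
    (fun k => (δ / 2 ^ k) ^ t * (δ / 2 ^ (k + 1)) ^ (-2 : ℝ)) (fun k => δ / 2 ^ k)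
    (fun k => by positivity) (fun k => by positivity) ?_
  · refine hmaster.trans ?_
    have hterm : ∀ k : ℕ, (δ / 2 ^ k) ^ t * (δ / 2 ^ (k + 1)) ^ (-2 : ℝ)
        * (16 * Real.pi * (δ / 2 ^ k) ^ 2)
        = (64 * Real.pi * δ ^ t) * ((2:ℝ) ^ (-t)) ^ k := by
      intro k
      have hx : (0:ℝ) < δ / 2 ^ k := by positivity
      have h1 : (δ / 2 ^ (k + 1)) ^ (-2 : ℝ) = ((δ / 2 ^ (k + 1)) ^ (2:ℕ))⁻¹ := by
        rw [← Real.rpow_natCast (δ / 2 ^ (k+1)) 2, ← Real.rpow_neg (by positivity)]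
        norm_num
      have h2 : (δ / 2 ^ k) ^ t = δ ^ t * ((2:ℝ) ^ (-t)) ^ k := by
        rw [Real.div_rpow hδ.le (by positivity), aux_pow_rpow,
          Real.rpow_neg (by norm_num : (0:ℝ) ≤ 2), inv_pow, div_eq_mul_inv]
      have h3 : ((δ / 2 ^ (k + 1)) ^ (2:ℕ))⁻¹ * (δ / 2 ^ k) ^ 2 = 4 := by
        rw [pow_succ]
        field_simp
        ring
      calc (δ / 2 ^ k) ^ t * (δ / 2 ^ (k + 1)) ^ (-2 : ℝ) * (16 * Real.pi * (δ / 2 ^ k) ^ 2)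
          = (δ / 2 ^ k) ^ t * (((δ / 2 ^ (k + 1)) ^ (2:ℕ))⁻¹ * (δ / 2 ^ k) ^ 2) * (16 * Real.pi) := by
            rw [h1]; push_cast; ring
        _ = (δ / 2 ^ k) ^ t * 4 * (16 * Real.pi) := by rw [h3]
        _ = (64 * Real.pi * δ ^ t) * ((2:ℝ) ^ (-t)) ^ k := by rw [h2]; ring
    calc ∑' k, ENNReal.ofReal ((δ / 2 ^ k) ^ t * (δ / 2 ^ (k + 1)) ^ (-2 : ℝ)
            * (16 * Real.pi * (δ / 2 ^ k) ^ 2))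
        = ∑' k, ENNReal.ofReal ((64 * Real.pi * δ ^ t) * ((2:ℝ) ^ (-t)) ^ k) := by
          apply tsum_congr; intro k; rw [hterm k]
      _ ≤ ENNReal.ofReal ((64 * Real.pi * δ ^ t) / (1 - 2 ^ (-t))) := by
          apply aux_geom _ _ (by positivity) (Real.rpow_nonneg (by norm_num) _)
          apply Real.rpow_lt_one_of_one_lt_of_neg (by norm_num) (by linarith)
      _ = ENNReal.ofReal (64 * Real.pi / (1 - 2 ^ (-t)) * δ ^ t) := by congr 1; ring
  · intro u hu
    obtain ⟨hu1, hu2⟩ := hu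
    set v : ℝ := ‖1 - (starRingEnd ℂ) w * u‖ with hvv
    have hv0 : 0 < v := by
      have := aux_one_sub_le_right hw.le hu1.le
      simp only [← hvv] at this
      linarith
    obtain ⟨k, hk1, hk2⟩ := aux_dyadic_down hv0 hu2
    refine ⟨k, ?_, hu1, hk2⟩
    have hA : v ^ (t - 2) = v ^ t * v ^ (-2 : ℝ) := by
      rw [← Real.rpow_add hv0]; ring_nf
    show v ^ (t - 2) ≤ (δ / 2 ^ k) ^ t * (δ / 2 ^ (k + 1)) ^ (-2 : ℝ)
    rw [hA]
    apply mul_le_mul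
    · exact Real.rpow_le_rpow hv0.le hk2.le ht.le
    · exact Real.rpow_le_rpow_of_nonpos (by positivity) hk1 (by norm_num)
    · exact Real.rpow_nonneg hv0.le _
    · exact Real.rpow_nonneg (by positivity) _


set_option maxHeartbeats 2000000

/-- The weighted integral estimate: for `0 < η < p/2` there is `c = c(p,η) > 0` with
`∫_D (1-|u|²)^{p-η} |1 - conj(z)u|^{-(2+p)} |1 - conj(w)u|^{-2} dm(u)
  ≤ c (1-|z|²)^{-η} |1 - conj(w)z|^{-2}` for all `z, w ∈ D`. -/
theorem forelli_rudin_type_estimate (p η : ℝ) (hp : 0 < p) (hη : 0 < η) (hηp : η < p / 2) :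
    ∃ c : ℝ, 0 < c ∧ ∀ z ∈ unitDisk, ∀ w ∈ unitDisk,
      (∫⁻ u in unitDisk,
        ENNReal.ofReal
          ((1 - ‖u‖ ^ 2) ^ (p - η) *
            (‖1 - (starRingEnd ℂ) z * u‖) ^ (-(2 + p)) *
            (‖1 - (starRingEnd ℂ) w * u‖) ^ (-2 : ℝ))) ≤
        ENNReal.ofReal
          (c * (1 - ‖z‖ ^ 2) ^ (-η) *
            (‖1 - (starRingEnd ℂ) w * z‖) ^ (-2 : ℝ)) := by
  have hpη : 0 < p - η := by linarith
  set CA : ℝ := 64 * Real.pi / (1 - 2 ^ (-η)) with hCA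
  set CB : ℝ := 64 * Real.pi / (1 - 2 ^ (-(p - η))) with hCB
  have h2η : (2:ℝ) ^ (-η) < 1 := Real.rpow_lt_one_of_one_lt_of_neg (by norm_num) (by linarith)
  have h2pη : (2:ℝ) ^ (-(p - η)) < 1 :=
    Real.rpow_lt_one_of_one_lt_of_neg (by norm_num) (by linarith)
  have hCApos : 0 < CA := by
    apply div_pos (by positivity) (by linarith)
  have hCBpos : 0 < CB := by
    apply div_pos (by positivity) (by linarith)
  refine ⟨2 ^ (p - η) * 4 * (2 ^ η * CA + 4 ^ η * CB), by positivity, ?_⟩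
  intro z hz w hw
  have hz1 : ‖z‖ < 1 := by
    rwa [unitDisk, Metric.mem_ball, Complex.dist_eq, sub_zero] at hz
  have hw1 : ‖w‖ < 1 := by
    rwa [unitDisk, Metric.mem_ball, Complex.dist_eq, sub_zero] at hw
  set K : ℝ := ‖1 - (starRingEnd ℂ) w * z‖ with hKdef
  have hKd : 1 - ‖z‖ ≤ K := aux_one_sub_le_left hw1.le hz1.le
  have hK : 0 < K := by linarith
  set δ : ℝ := K / 2 with hδdef
  have hδ : 0 < δ := by positivity
  set d : ℝ := 1 - ‖z‖ with hddef
  have hd : 0 < d := by simp only [hddef]; linarith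
  set D : ℝ := 1 - ‖z‖ ^ 2 with hDdef
  have hD : 0 < D := by
    simp only [hDdef]; nlinarith [norm_nonneg z]
  have hDd : D ≤ 2 * d := by
    simp only [hDdef, hddef]; nlinarith [norm_nonneg z]
  -- the two majorants
  set C1 : ℝ := 2 ^ (p - η) * δ ^ (-2 : ℝ) with hC1
  set C2 : ℝ := 2 ^ (p - η) * δ ^ (-(2 + p)) with hC2
  have hC1pos : 0 < C1 := by positivity
  have hC2pos : 0 < C2 := by positivity
  set Bset : Set ℂ := {u : ℂ | ‖u‖ < 1 ∧ ‖1 - (starRingEnd ℂ) w * u‖ < δ}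
    with hBset
  have hBmeas : MeasurableSet Bset := by
    apply MeasurableSet.inter
    · exact measurableSet_lt (continuous_norm.measurable) measurable_const
    · exact measurableSet_lt ((continuous_norm.comp
        (continuous_const.sub (continuous_const.mul continuous_id))).measurable) measurable_const
  set g1 : ℂ → ℝ≥0∞ := fun u =>
    ENNReal.ofReal (C1 * (‖1 - (starRingEnd ℂ) z * u‖) ^ (-(2 + η))) with hg1
  set g2 : ℂ → ℝ≥0∞ := Bset.indicator (fun u =>
    ENNReal.ofReal (C2 * (‖1 - (starRingEnd ℂ) w * u‖) ^ ((p - η) - 2))) with hg2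
  have hmr1 : Measurable (fun x : ℝ => x ^ (-(2 + η))) := by measurability
  have hmr2 : Measurable (fun x : ℝ => x ^ ((p - η) - 2)) := by measurability
  have hmA1 : Measurable (fun u : ℂ => ‖1 - (starRingEnd ℂ) z * u‖) :=
    (continuous_norm.comp
      (continuous_const.sub (continuous_const.mul continuous_id))).measurable
  have hmA2 : Measurable (fun u : ℂ => ‖1 - (starRingEnd ℂ) w * u‖) :=
    (continuous_norm.comp
      (continuous_const.sub (continuous_const.mul continuous_id))).measurable
  have hg1meas : Measurable g1 := by
    rw [hg1]
    exact (((hmr1.comp hmA1)).const_mul C1).ennreal_ofReal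
  have hg2meas : Measurable g2 := by
    rw [hg2]
    exact Measurable.indicator (((hmr2.comp hmA2)).const_mul C2).ennreal_ofReal hBmeas
  -- pointwise estimate
  have hpt : ∀ u ∈ unitDisk,
      ENNReal.ofReal
          ((1 - ‖u‖ ^ 2) ^ (p - η) *
            (‖1 - (starRingEnd ℂ) z * u‖) ^ (-(2 + p)) *
            (‖1 - (starRingEnd ℂ) w * u‖) ^ (-2 : ℝ)) ≤ g1 u + g2 u := by
    intro u hu
    have hu1 : ‖u‖ < 1 := by
      rwa [unitDisk, Metric.mem_ball, Complex.dist_eq, sub_zero] at hu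
    set W : ℝ := 1 - ‖u‖ ^ 2 with hW
    set A1 : ℝ := ‖1 - (starRingEnd ℂ) z * u‖ with hA1
    set A2 : ℝ := ‖1 - (starRingEnd ℂ) w * u‖ with hA2
    have hWpos : 0 < W := by
      simp only [hW]; nlinarith [norm_nonneg u]
    have hA1pos : 0 < A1 := by
      have := aux_one_sub_le_right hz1.le hu1.le; simp only [← hA1] at this; linarith
    have hA2pos : 0 < A2 := by
      have := aux_one_sub_le_right hw1.le hu1.le; simp only [← hA2] at this; linarith
    have hWA1 : W ≤ 2 * A1 := by
      have h1 := aux_one_sub_le_left hz1.le hu1.le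
      simp only [← hA1] at h1
      simp only [hW]; nlinarith [norm_nonneg u]
    have hWA2 : W ≤ 2 * A2 := by
      have h1 := aux_one_sub_le_left hw1.le hu1.le
      simp only [← hA2] at h1
      simp only [hW]; nlinarith [norm_nonneg u]
    have htri : K ≤ A2 + A1 := aux_triangle hz1.le hw1.le hu1.le
    by_cases hcase : A2 < δ
    · -- region B
      have hA1δ : δ ≤ A1 := by
        simp only [hδdef] at hcase ⊢; linarith
      have hreal : W ^ (p - η) * A1 ^ (-(2 + p)) * A2 ^ (-2 : ℝ)
          ≤ C2 * A2 ^ ((p - η) - 2) := by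
        have e1 : W ^ (p - η) ≤ 2 ^ (p - η) * A2 ^ (p - η) := by
          rw [← Real.mul_rpow (by norm_num) hA2pos.le]
          exact Real.rpow_le_rpow hWpos.le hWA2 hpη.le
        have e2 : A1 ^ (-(2 + p)) ≤ δ ^ (-(2 + p)) :=
          Real.rpow_le_rpow_of_nonpos hδ hA1δ (by linarith)
        have e3 : A2 ^ (p - η) * A2 ^ (-2 : ℝ) = A2 ^ ((p - η) - 2) := by
          rw [← Real.rpow_add hA2pos]; ring_nf
        calc W ^ (p - η) * A1 ^ (-(2 + p)) * A2 ^ (-2 : ℝ)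
            ≤ (2 ^ (p - η) * A2 ^ (p - η)) * (δ ^ (-(2 + p))) * A2 ^ (-2 : ℝ) := by
              apply mul_le_mul_of_nonneg_right _ (Real.rpow_nonneg hA2pos.le _)
              apply mul_le_mul e1 e2 (Real.rpow_nonneg hA1pos.le _) (by positivity)
          _ = C2 * (A2 ^ (p - η) * A2 ^ (-2 : ℝ)) := by rw [hC2]; ring
          _ = C2 * A2 ^ ((p - η) - 2) := by rw [e3]
      have hmem : u ∈ Bset := ⟨hu1, hcase⟩
      calc ENNReal.ofReal (W ^ (p - η) * A1 ^ (-(2 + p)) * A2 ^ (-2 : ℝ))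
          ≤ g2 u := by
            rw [hg2, Set.indicator_of_mem hmem]
            exact ENNReal.ofReal_le_ofReal hreal
        _ ≤ g1 u + g2 u := le_add_self
    · -- region A
      push_neg at hcase
      have hreal : W ^ (p - η) * A1 ^ (-(2 + p)) * A2 ^ (-2 : ℝ)
          ≤ C1 * A1 ^ (-(2 + η)) := by
        have e1 : W ^ (p - η) ≤ 2 ^ (p - η) * A1 ^ (p - η) := by
          rw [← Real.mul_rpow (by norm_num) hA1pos.le]
          exact Real.rpow_le_rpow hWpos.le hWA1 hpη.le
        have e2 : A2 ^ (-2 : ℝ) ≤ δ ^ (-2 : ℝ) :=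
          Real.rpow_le_rpow_of_nonpos hδ hcase (by norm_num)
        have e3 : A1 ^ (p - η) * A1 ^ (-(2 + p)) = A1 ^ (-(2 + η)) := by
          rw [← Real.rpow_add hA1pos]; ring_nf
        calc W ^ (p - η) * A1 ^ (-(2 + p)) * A2 ^ (-2 : ℝ)
            ≤ (2 ^ (p - η) * A1 ^ (p - η)) * A1 ^ (-(2 + p)) * δ ^ (-2 : ℝ) := by
              apply mul_le_mul _ e2 (Real.rpow_nonneg hA2pos.le _) (by positivity)
              apply mul_le_mul_of_nonneg_right e1 (Real.rpow_nonneg hA1pos.le _)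
          _ = C1 * (A1 ^ (p - η) * A1 ^ (-(2 + p))) := by rw [hC1]; ring
          _ = C1 * A1 ^ (-(2 + η)) := by rw [e3]
      calc ENNReal.ofReal (W ^ (p - η) * A1 ^ (-(2 + p)) * A2 ^ (-2 : ℝ))
          ≤ g1 u := by
            rw [hg1]
            exact ENNReal.ofReal_le_ofReal hreal
        _ ≤ g1 u + g2 u := le_self_add
  -- integrate
  have hDiskMeas : MeasurableSet unitDisk := Metric.isOpen_ball.measurableSet
  have step1 : (∫⁻ u in unitDisk,
      ENNReal.ofReal
          ((1 - ‖u‖ ^ 2) ^ (p - η) *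
            (‖1 - (starRingEnd ℂ) z * u‖) ^ (-(2 + p)) *
            (‖1 - (starRingEnd ℂ) w * u‖) ^ (-2 : ℝ)))
      ≤ (∫⁻ u in unitDisk, g1 u) + (∫⁻ u in unitDisk, g2 u) := by
    calc (∫⁻ u in unitDisk, ENNReal.ofReal
          ((1 - ‖u‖ ^ 2) ^ (p - η) *
            (‖1 - (starRingEnd ℂ) z * u‖) ^ (-(2 + p)) *
            (‖1 - (starRingEnd ℂ) w * u‖) ^ (-2 : ℝ)))
        ≤ ∫⁻ u in unitDisk, (g1 u + g2 u) := setLIntegral_mono' hDiskMeas hpt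
      _ = (∫⁻ u in unitDisk, g1 u) + (∫⁻ u in unitDisk, g2 u) := lintegral_add_left hg1meas _
  have hint1 : (∫⁻ u in unitDisk, g1 u) ≤ ENNReal.ofReal (C1 * (CA * d ^ (-η))) := by
    rw [hg1]
    calc (∫⁻ u in unitDisk, ENNReal.ofReal
          (C1 * (‖1 - (starRingEnd ℂ) z * u‖) ^ (-(2 + η))))
        = ∫⁻ u in unitDisk, ENNReal.ofReal C1 *
            ENNReal.ofReal ((‖1 - (starRingEnd ℂ) z * u‖) ^ (-(2 + η))) := by
          congr 1; ext u; rw [← ENNReal.ofReal_mul hC1pos.le]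
      _ = ENNReal.ofReal C1 * ∫⁻ u in unitDisk,
            ENNReal.ofReal ((‖1 - (starRingEnd ℂ) z * u‖) ^ (-(2 + η))) :=
          lintegral_const_mul' _ _ ENNReal.ofReal_ne_top
      _ ≤ ENNReal.ofReal C1 * ENNReal.ofReal (CA * d ^ (-η)) := by
          apply mul_le_mul_right
          have := aux_lemA hη z hz1
          rw [hCA, hddef]
          exact this
      _ = ENNReal.ofReal (C1 * (CA * d ^ (-η))) := by rw [← ENNReal.ofReal_mul hC1pos.le]
  have hint2 : (∫⁻ u in unitDisk, g2 u) ≤ ENNReal.ofReal (C2 * (CB * δ ^ (p - η))) := by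
    rw [hg2]
    calc (∫⁻ u in unitDisk, Bset.indicator (fun u =>
          ENNReal.ofReal (C2 * (‖1 - (starRingEnd ℂ) w * u‖) ^ ((p - η) - 2))) u)
        ≤ ∫⁻ u, Bset.indicator (fun u =>
          ENNReal.ofReal (C2 * (‖1 - (starRingEnd ℂ) w * u‖) ^ ((p - η) - 2))) u :=
          setLIntegral_le_lintegral _ _
      _ = ∫⁻ u in Bset,
            ENNReal.ofReal (C2 * (‖1 - (starRingEnd ℂ) w * u‖) ^ ((p - η) - 2)) :=
          lintegral_indicator hBmeas _
      _ = ENNReal.ofReal C2 * ∫⁻ u in Bset,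
            ENNReal.ofReal ((‖1 - (starRingEnd ℂ) w * u‖) ^ ((p - η) - 2)) := by
          rw [← lintegral_const_mul' _ _ ENNReal.ofReal_ne_top]
          congr 1; ext u; rw [← ENNReal.ofReal_mul hC2pos.le]
      _ ≤ ENNReal.ofReal C2 * ENNReal.ofReal (CB * δ ^ (p - η)) := by
          apply mul_le_mul_right
          have := aux_lemB hpη w hw1 hδ
          rw [hCB, hBset]
          exact this
      _ = ENNReal.ofReal (C2 * (CB * δ ^ (p - η))) := by rw [← ENNReal.ofReal_mul hC2pos.le]
  -- final arithmetic
  have hfinal : C1 * (CA * d ^ (-η)) + C2 * (CB * δ ^ (p - η))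
      ≤ (2 ^ (p - η) * 4 * (2 ^ η * CA + 4 ^ η * CB)) * D ^ (-η) * K ^ (-2 : ℝ) := by
    have hδ2 : δ ^ (-2 : ℝ) = 4 * K ^ (-2 : ℝ) := by
      rw [hδdef]
      rw [show ((-2 : ℝ)) = ((-(2:ℕ) : ℤ) : ℝ) by norm_num, Real.rpow_intCast, Real.rpow_intCast]
      rw [zpow_neg, zpow_neg, zpow_natCast, zpow_natCast]
      field_simp
      ring
    have hsplit2 : δ ^ (-(2 + p)) * δ ^ (p - η) = δ ^ (-2 : ℝ) * δ ^ (-η) := by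
      rw [← Real.rpow_add hδ, ← Real.rpow_add hδ]; ring_nf
    have hdD : d ^ (-η) ≤ 2 ^ η * D ^ (-η) := by
      have h1 : D / 2 ≤ d := by linarith
      have h2 : d ^ (-η) ≤ (D / 2) ^ (-η) :=
        Real.rpow_le_rpow_of_nonpos (by positivity) h1 (by linarith)
      have h3 : (D / 2) ^ (-η) = 2 ^ η * D ^ (-η) := by
        rw [Real.div_rpow hD.le (by norm_num), Real.rpow_neg hD.le,
          Real.rpow_neg (by norm_num : (0:ℝ) ≤ 2)]
        field_simp
      linarith [h2, le_of_eq h3]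
    have hδD : δ ^ (-η) ≤ 4 ^ η * D ^ (-η) := by
      have h1 : D / 4 ≤ δ := by
        simp only [hδdef]; linarith
      have h2 : δ ^ (-η) ≤ (D / 4) ^ (-η) :=
        Real.rpow_le_rpow_of_nonpos (by positivity) h1 (by linarith)
      have h3 : (D / 4) ^ (-η) = 4 ^ η * D ^ (-η) := by
        rw [Real.div_rpow hD.le (by norm_num), Real.rpow_neg hD.le,
          Real.rpow_neg (by norm_num : (0:ℝ) ≤ 4)]
        field_simp
      linarith [h2, le_of_eq h3]
    have hKpos : 0 < K ^ (-2 : ℝ) := Real.rpow_pos_of_pos hK _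
    have h2pηpos : (0:ℝ) < 2 ^ (p - η) := Real.rpow_pos_of_pos (by norm_num) _
    calc C1 * (CA * d ^ (-η)) + C2 * (CB * δ ^ (p - η))
        = 2 ^ (p - η) * (4 * K ^ (-2 : ℝ)) * (CA * d ^ (-η))
          + 2 ^ (p - η) * (4 * K ^ (-2 : ℝ)) * (CB * δ ^ (-η)) := by
          rw [hC1, hC2, ← hδ2]
          have : 2 ^ (p - η) * δ ^ (-(2 + p)) * (CB * δ ^ (p - η))
              = 2 ^ (p - η) * (δ ^ (-(2 + p)) * δ ^ (p - η)) * CB := by ring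
          rw [this, hsplit2]
          ring
      _ ≤ 2 ^ (p - η) * (4 * K ^ (-2 : ℝ)) * (CA * (2 ^ η * D ^ (-η)))
          + 2 ^ (p - η) * (4 * K ^ (-2 : ℝ)) * (CB * (4 ^ η * D ^ (-η))) := by
          apply add_le_add
          · apply mul_le_mul_of_nonneg_left _ (by positivity)
            exact mul_le_mul_of_nonneg_left hdD hCApos.le
          · apply mul_le_mul_of_nonneg_left _ (by positivity)
            exact mul_le_mul_of_nonneg_left hδD hCBpos.le
      _ = (2 ^ (p - η) * 4 * (2 ^ η * CA + 4 ^ η * CB)) * D ^ (-η) * K ^ (-2 : ℝ) := by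
          ring
  calc (∫⁻ u in unitDisk,
      ENNReal.ofReal
          ((1 - ‖u‖ ^ 2) ^ (p - η) *
            (‖1 - (starRingEnd ℂ) z * u‖) ^ (-(2 + p)) *
            (‖1 - (starRingEnd ℂ) w * u‖) ^ (-2 : ℝ)))
      ≤ (∫⁻ u in unitDisk, g1 u) + (∫⁻ u in unitDisk, g2 u) := step1
    _ ≤ ENNReal.ofReal (C1 * (CA * d ^ (-η))) + ENNReal.ofReal (C2 * (CB * δ ^ (p - η))) :=
        add_le_add hint1 hint2
    _ = ENNReal.ofReal (C1 * (CA * d ^ (-η)) + C2 * (CB * δ ^ (p - η))) := by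
        rw [← ENNReal.ofReal_add (by positivity) (by positivity)]
    _ ≤ ENNReal.ofReal ((2 ^ (p - η) * 4 * (2 ^ η * CA + 4 ^ η * CB)) * D ^ (-η) * K ^ (-2 : ℝ)) :=
        ENNReal.ofReal_le_ofReal hfinal
    _ = ENNReal.ofReal ((2 ^ (p - η) * 4 * (2 ^ η * CA + 4 ^ η * CB)) *
          (1 - ‖z‖ ^ 2) ^ (-η) *
          (‖1 - (starRingEnd ℂ) w * z‖) ^ (-2 : ℝ)) := by
        rw [hDdef, hKdef]
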